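/- For integers d ≥ 2 and odd n ≥ 3 with d ≥ n²/16, the generalized binomial coefficient C(d+n/2−1, d) := Γ(d+n/2)/(Γ(d+1)·Γ(n/2)) satisfies (d^(n/2−1)/Γ(n/2))·(1+1/(4d))^(-2) ≤ C(d+n/2−1,d) ≤ (d^(n/2−1)/Γ(n/2))·(1−n²/(16d))^(-2). -/

import Mathlib

open Real Finset

lemma gamma_mid_sq_le (x y : ℝ) (hx : 0 < x) (hy : 0 < y) :
    Real.Gamma ((x + y) / 2) ^ 2 ≤ Real.Gamma x * Real.Gamma y := by
  have h := Real.convexOn_log_Gamma.2 (Set.mem_Ioi.mpr hx) (Set.mem_Ioi.mpr hy)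
      (by norm_num : (0:ℝ) ≤ 1/2) (by norm_num : (0:ℝ) ≤ 1/2) (by norm_num)
  simp only [smul_eq_mul, Function.comp_apply] at h
  have hmid : (1/2 : ℝ) * x + (1/2) * y = (x+y)/2 := by ring
  rw [hmid] at h
  have hgx := Real.Gamma_pos_of_pos hx
  have hgy := Real.Gamma_pos_of_pos hy
  have hgm := Real.Gamma_pos_of_pos (by positivity : (0:ℝ) < (x+y)/2)
  have := Real.exp_le_exp.mpr (by linarith : 2 * Real.log (Real.Gamma ((x+y)/2)) ≤ Real.log (Real.Gamma x) + Real.log (Real.Gamma y))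
  rw [Real.exp_add, Real.exp_log hgx, Real.exp_log hgy, two_mul, Real.exp_add, Real.exp_log hgm] at this
  calc Real.Gamma ((x+y)/2) ^ 2 = Real.Gamma ((x+y)/2) * Real.Gamma ((x+y)/2) := sq _
    _ ≤ _ := this

lemma gamma_add_nat (x : ℝ) (hx : 0 < x) (m : ℕ) :
    Real.Gamma (x + m) = Real.Gamma x * ∏ k ∈ Finset.range m, (x + k) := by
  induction m with
  | zero => simp
  | succ m ih =>
    have : x + (m+1 : ℕ) = (x + m) + 1 := by push_cast; ring
    rw [this, Real.Gamma_add_one (by positivity), ih, Finset.prod_range_succ]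
    ring

lemma pow_binom_le (c t : ℝ) (hc : 0 ≤ c) (ht : 0 ≤ t) (m : ℕ) :
    c ^ (m+1) + (m+1) * t * c ^ m ≤ (c + t) ^ (m+1) := by
  induction m with
  | zero => norm_num
  | succ m ih =>
    have hpow : (0:ℝ) ≤ c ^ m := by positivity
    have hct : (0:ℝ) ≤ c + t := by linarith
    push_cast
    calc c ^ (m+1+1) + ((m:ℝ) + 1 + 1) * t * c ^ (m+1)
        ≤ (c + t) * (c ^ (m+1) + ((m:ℝ)+1) * t * c ^ m) := by
          have key : (c+t)*(c^(m+1) + ((m:ℝ)+1)*t*c^m)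
              = c^(m+1+1) + ((m:ℝ)+1+1)*t*c^(m+1) + ((m:ℝ)+1)*t^2*c^m := by
            rw [pow_succ c (m+1), pow_succ c m]; ring
          have hnn : (0:ℝ) ≤ ((m:ℝ)+1)*t^2*c^m := by positivity
          linarith
      _ ≤ (c + t) * (c + t) ^ (m+1) := by
          have := ih; push_cast at this
          exact mul_le_mul_of_nonneg_left this hct
      _ = (c + t) ^ (m+1+1) := by ring

lemma prod_upper (D : ℝ) (hD : 0 ≤ D) (m : ℕ) :
    ∏ k ∈ Finset.range m, (D + 1/2 + k) ≤ (D + m/2) ^ m := by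
  induction m with
  | zero => simp
  | succ m ih =>
    rw [Finset.prod_range_succ]
    have hlast : (0:ℝ) ≤ D + 1/2 + m := by positivity
    have step : (D + m/2) ^ m * (D + 1/2 + m) ≤ (D + (m+1:ℕ)/2) ^ (m+1) := by
      have h := pow_binom_le (D + m/2) (1/2) (by positivity) (by norm_num) m
      have e1 : D + ((m:ℕ)+1:ℕ)/2 = (D + (m:ℝ)/2) + 1/2 := by push_cast; ring
      rw [e1]
      nlinarith [pow_succ (D + (m:ℝ)/2) m, pow_nonneg (by positivity : (0:ℝ) ≤ D + (m:ℝ)/2) m]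
    calc (∏ k ∈ Finset.range m, (D + 1/2 + k)) * (D + 1/2 + m)
        ≤ (D + m/2) ^ m * (D + 1/2 + m) := mul_le_mul_of_nonneg_right ih hlast
      _ ≤ _ := step

lemma prod_lower (D : ℝ) (hD : 0 ≤ D) (m : ℕ) :
    D ^ m ≤ ∏ k ∈ Finset.range m, (D + 1/2 + k) := by
  calc D ^ m = ∏ _k ∈ Finset.range m, D := by rw [Finset.prod_const, Finset.card_range]
    _ ≤ _ := Finset.prod_le_prod (fun k _ => hD)
        (fun k _ => by have : (0:ℝ) ≤ (k:ℝ) := Nat.cast_nonneg k; linarith)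


lemma aux_h4 (u : ℝ) (hu : 0 ≤ u) : 1 + 4*u ≤ (1+u)^4 := by
  nlinarith [sq_nonneg u, mul_nonneg (mul_nonneg hu hu) hu,
    mul_nonneg (mul_nonneg (mul_nonneg hu hu) hu) hu]

lemma aux_base (x : ℝ) (h0 : 0 ≤ x) (h2 : x ≤ 2) : (1+x)*(1-x/2)^2 ≤ 1 := by
  nlinarith [mul_nonneg (sq_nonneg x) (by linarith : (0:ℝ) ≤ 2 - x)]

lemma aux_m (M D : ℝ) (h1 : 1 ≤ M) (h : (2*M+1)^2 ≤ 16*D) : M^2 ≤ 4*D ∧ M ≤ 4*D := by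
  constructor
  · nlinarith
  · nlinarith

set_option maxHeartbeats 1000000 in
/-- For integers `d ≥ 2` and odd `n ≥ 3` with `d ≥ n²/16`, the generalized binomial
coefficient `C(d+n/2−1, d) = Γ(d+n/2)/(Γ(d+1)·Γ(n/2))` satisfies
`(d^(n/2−1)/Γ(n/2))·(1+1/(4d))⁻² ≤ C(d+n/2−1,d) ≤ (d^(n/2−1)/Γ(n/2))·(1−n²/(16d))⁻²`. -/
theorem stmt_19 (d n : ℕ) (hd : 2 ≤ d) (hn : 3 ≤ n) (hodd : Odd n)
    (hdn : (n : ℝ) ^ 2 / 16 ≤ d) :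
    (d : ℝ) ^ ((n : ℝ) / 2 - 1) / Real.Gamma ((n : ℝ) / 2) / (1 + 1 / (4 * d)) ^ 2 ≤
      Real.Gamma ((d : ℝ) + (n : ℝ) / 2) / (Real.Gamma ((d : ℝ) + 1) * Real.Gamma ((n : ℝ) / 2)) ∧
    Real.Gamma ((d : ℝ) + (n : ℝ) / 2) / (Real.Gamma ((d : ℝ) + 1) * Real.Gamma ((n : ℝ) / 2)) ≤
      (d : ℝ) ^ ((n : ℝ) / 2 - 1) / Real.Gamma ((n : ℝ) / 2) / (1 - (n : ℝ) ^ 2 / (16 * d)) ^ 2 := by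
  obtain ⟨m, rfl⟩ : ∃ m, n = 2 * m + 1 := hodd
  set D : ℝ := (d : ℝ) with hDdef
  have hD2 : (2:ℝ) ≤ D := by rw [hDdef]; exact_mod_cast hd
  have hD0 : (0:ℝ) < D := by linarith
  have hm1 : 1 ≤ m := by omega
  have hM1 : (1:ℝ) ≤ (m:ℝ) := by exact_mod_cast hm1
  -- n as real
  have hNcast : ((2*m+1 : ℕ) : ℝ) = 2*(m:ℝ)+1 := by push_cast; ring
  have hhalf : ((2*m+1 : ℕ) : ℝ)/2 = (m:ℝ) + 1/2 := by rw [hNcast]; ring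
  -- strict inequality n^2 < 16 d
  have hle : (2*m+1)^2 ≤ 16*d := by
    have h := hdn
    rw [div_le_iff₀ (by norm_num : (0:ℝ) < 16)] at h
    exact_mod_cast (by push_cast at h ⊢; linarith : (((2*m+1)^2 : ℕ) : ℝ) ≤ ((16*d : ℕ) : ℝ))
  have hlt : ((2*m+1 : ℕ):ℝ)^2 < 16*D := by
    obtain ⟨K, hK⟩ : ∃ K, (2*m+1)^2 = 4*K+1 := ⟨m*m+m, by ring⟩
    have : (2*m+1)^2 < 16*d := by omega
    calc ((2*m+1 : ℕ):ℝ)^2 = (((2*m+1)^2 : ℕ) : ℝ) := by push_cast; ring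
      _ < ((16*d : ℕ):ℝ) := by exact_mod_cast this
      _ = 16*D := by push_cast; ring
  -- positivity facts
  have hGn : 0 < Real.Gamma (((2*m+1:ℕ):ℝ)/2) := by
    apply Real.Gamma_pos_of_pos; rw [hhalf]; positivity
  set G := Real.Gamma (((2*m+1:ℕ):ℝ)/2) with hGdef
  have hΓh : 0 < Real.Gamma (D + 1/2) := Real.Gamma_pos_of_pos (by linarith)
  have hΓ1 : 0 < Real.Gamma (D + 1) := Real.Gamma_pos_of_pos (by linarith)
  set P := ∏ k ∈ Finset.range m, (D + 1/2 + k) with hPdef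
  have hP0 : 0 < P := Finset.prod_pos (fun k _ => by
    have : (0:ℝ) ≤ (k:ℝ) := Nat.cast_nonneg k; linarith)
  -- Gamma factorization
  have hGam : Real.Gamma (D + ((2*m+1:ℕ):ℝ)/2) = Real.Gamma (D + 1/2) * P := by
    have := gamma_add_nat (D + 1/2) (by linarith) m
    rw [hhalf, show D + ((m:ℝ) + 1/2) = (D + 1/2) + (m:ℝ) by ring, this]
  -- Gautschi via log-convexity
  have q1 : Real.Gamma (D + 1/2) ^ 2 ≤ Real.Gamma D * Real.Gamma (D+1) := by
    have := gamma_mid_sq_le D (D+1) hD0 (by linarith)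
    rwa [show (D + (D+1))/2 = D + 1/2 by ring] at this
  have hΓD1 : Real.Gamma (D + 1) = D * Real.Gamma D := Real.Gamma_add_one (ne_of_gt hD0)
  have hΓD : 0 < Real.Gamma D := Real.Gamma_pos_of_pos hD0
  have q1' : Real.Gamma (D + 1/2) ^ 2 * D ≤ Real.Gamma (D+1) ^ 2 := by
    calc Real.Gamma (D + 1/2) ^ 2 * D ≤ (Real.Gamma D * Real.Gamma (D+1)) * D :=
          mul_le_mul_of_nonneg_right q1 hD0.le
      _ = Real.Gamma (D+1) ^ 2 := by rw [hΓD1]; ring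
  have hΓ32 : Real.Gamma (D + 3/2) = (D + 1/2) * Real.Gamma (D + 1/2) := by
    rw [show D + 3/2 = (D + 1/2) + 1 by ring, Real.Gamma_add_one (by positivity)]
  have q2 : Real.Gamma (D+1) ^ 2 ≤ Real.Gamma (D+1/2) * Real.Gamma (D+3/2) := by
    have := gamma_mid_sq_le (D+1/2) (D+3/2) (by linarith) (by linarith)
    rwa [show ((D+1/2) + (D+3/2))/2 = D + 1 by ring] at this
  have q2' : Real.Gamma (D+1) ^ 2 ≤ (D+1) * Real.Gamma (D+1/2) ^ 2 := by
    rw [hΓ32] at q2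
    calc Real.Gamma (D+1) ^ 2 ≤ Real.Gamma (D+1/2) * ((D+1/2) * Real.Gamma (D+1/2)) := q2
      _ = (D+1/2) * Real.Gamma (D+1/2)^2 := by ring
      _ ≤ (D+1) * Real.Gamma (D+1/2)^2 :=
          mul_le_mul_of_nonneg_right (by linarith) (sq_nonneg _)
  have hs0 : 0 < Real.sqrt D := Real.sqrt_pos.mpr hD0
  have hs1 : 0 < Real.sqrt (D+1) := Real.sqrt_pos.mpr (by linarith)
  have hsq : Real.sqrt D ^ 2 = D := Real.sq_sqrt hD0.le
  have hsq1 : Real.sqrt (D+1) ^ 2 = D + 1 := Real.sq_sqrt (by linarith)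
  have g_up : Real.Gamma (D+1/2) * Real.sqrt D ≤ Real.Gamma (D+1) := by
    apply le_of_pow_le_pow_left₀ two_ne_zero hΓ1.le
    calc (Real.Gamma (D+1/2) * Real.sqrt D)^2 = Real.Gamma (D+1/2)^2 * D := by
          rw [mul_pow, hsq]
      _ ≤ _ := q1'
  have g_low : Real.Gamma (D+1) ≤ Real.Gamma (D+1/2) * Real.sqrt (D+1) := by
    apply le_of_pow_le_pow_left₀ two_ne_zero (by positivity)
    calc Real.Gamma (D+1)^2 ≤ (D+1) * Real.Gamma (D+1/2)^2 := q2'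
      _ = (Real.Gamma (D+1/2) * Real.sqrt (D+1))^2 := by rw [mul_pow, hsq1]; ring
  -- rewrite the rpow
  have hApow : D ^ (((2*m+1:ℕ):ℝ)/2 - 1) = D ^ m / Real.sqrt D := by
    rw [show ((2*m+1:ℕ):ℝ)/2 - 1 = (m:ℝ) - (1/2 : ℝ) by rw [hNcast]; ring,
      Real.rpow_sub hD0, Real.rpow_natCast, ← Real.sqrt_eq_rpow]
  -- key numeric bound, lower side
  have key_low : Real.sqrt (D+1) ≤ Real.sqrt D * (1 + 1/(4*D))^2 := by
    have hu : (0:ℝ) < 1/(4*D) := by positivity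
    have h4 : 1 + 4*(1/(4*D)) ≤ (1 + 1/(4*D))^4 := aux_h4 _ hu.le
    have hDu : D * (1 + 4*(1/(4*D))) = D + 1 := by field_simp
    have hcmp : D + 1 ≤ D * (1 + 1/(4*D))^4 := by
      have h5 := mul_le_mul_of_nonneg_left h4 hD0.le
      linarith
    calc Real.sqrt (D+1) ≤ Real.sqrt (D * (1 + 1/(4*D))^4) := Real.sqrt_le_sqrt hcmp
      _ = Real.sqrt D * (1 + 1/(4*D))^2 := by
          rw [show (1 + 1/(4*D))^4 = ((1 + 1/(4*D))^2)^2 by ring,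
            Real.sqrt_mul hD0.le, Real.sqrt_sq (by positivity)]
  -- key combinatorial bound, upper side
  set a : ℝ := ((2*m+1:ℕ):ℝ)^2 / (16*D) with hadef
  have ha1 : a < 1 := by
    rw [hadef, div_lt_one (by positivity)]; exact hlt
  have ha0 : 0 < a := by positivity
  set x : ℝ := (m:ℝ)/(2*D) with hxdef
  have hx0 : 0 < x := by positivity
  obtain ⟨hmsq, hm4D⟩ : (m:ℝ)^2 ≤ 4*D ∧ (m:ℝ) ≤ 4*D := by
    apply aux_m _ _ hM1
    rw [hNcast] at hlt; linarith
  have hx2 : x ≤ 2 := by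
    rw [hxdef, div_le_iff₀ (by positivity)]; linarith
  have hax : 1 - a ≤ 1 - (m:ℝ)*x/2 := by
    have h1 : (m:ℝ)*x/2 = (m:ℝ)^2/(4*D) := by rw [hxdef]; field_simp; ring
    have h2 : (m:ℝ)^2/(4*D) ≤ a := by
      rw [hadef, div_le_div_iff₀ (by positivity) (by positivity), hNcast]
      have e : (2*(m:ℝ)+1)^2*(4*D) - (m:ℝ)^2*(16*D) = (16*(m:ℝ)+4)*D := by ring
      have hnn : (0:ℝ) ≤ (16*(m:ℝ)+4)*D := by positivity
      linarith
    linarith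
  have hber : 1 - (m:ℝ)*x/2 ≤ (1 - x/2)^m := by
    have := one_add_mul_le_pow (by linarith : (-2:ℝ) ≤ -(x/2)) m
    calc 1 - (m:ℝ)*x/2 = 1 + (m:ℝ)*(-(x/2)) := by ring
      _ ≤ (1 + -(x/2))^m := this
      _ = (1 - x/2)^m := by ring_nf
  have h0a : 0 ≤ 1 - a := by linarith
  have hbase : (1+x)*(1-x/2)^2 ≤ 1 := aux_base x hx0.le hx2
  have h1x2 : 0 ≤ 1 - x/2 := by linarith
  have core : (D + (m:ℝ)/2)^m * (1-a)^2 ≤ D^m := by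
    have hDx : D + (m:ℝ)/2 = D*(1+x) := by rw [hxdef]; field_simp
    have step1 : (1-a)^2 ≤ ((1-x/2)^m)^2 :=
      pow_le_pow_left₀ h0a (hax.trans hber) 2
    have step2 : (D*(1+x))^m * ((1-x/2)^m)^2 = D^m * ((1+x)*(1-x/2)^2)^m := by
      rw [mul_pow, mul_pow, ← pow_mul, ← pow_mul, mul_comm 2 m]; ring
    have step3 : ((1+x)*(1-x/2)^2)^m ≤ 1 := pow_le_one₀ (mul_nonneg (by linarith) (sq_nonneg _)) hbase
    calc (D + (m:ℝ)/2)^m * (1-a)^2 ≤ (D*(1+x))^m * ((1-x/2)^m)^2 := by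
          rw [hDx]; exact mul_le_mul_of_nonneg_left step1 (by positivity)
      _ = D^m * ((1+x)*(1-x/2)^2)^m := step2
      _ ≤ D^m * 1 := mul_le_mul_of_nonneg_left step3 (by positivity)
      _ = D^m := mul_one _
  -- product bounds
  have hPlow : D^m ≤ P := prod_lower D hD0.le m
  have hPup : P ≤ (D + (m:ℝ)/2)^m := prod_upper D hD0.le m
  have hε : (0:ℝ) < (1 + 1/(4*D))^2 := by positivity
  constructor
  · -- lower bound
    rw [hApow, hGam]
    have L2 : D^m / Real.sqrt (D+1) ≤ Real.Gamma (D+1/2) * P / Real.Gamma (D+1) := by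
      rw [div_le_div_iff₀ hs1 hΓ1]
      calc D^m * Real.Gamma (D+1) ≤ D^m * (Real.Gamma (D+1/2) * Real.sqrt (D+1)) :=
            mul_le_mul_of_nonneg_left g_low (by positivity)
        _ ≤ P * (Real.Gamma (D+1/2) * Real.sqrt (D+1)) :=
            mul_le_mul_of_nonneg_right hPlow (by positivity)
        _ = Real.Gamma (D+1/2) * P * Real.sqrt (D+1) := by ring
    have L1 : D^m / Real.sqrt D / (1 + 1/(4*D))^2 ≤ D^m / Real.sqrt (D+1) := by
      rw [div_div, div_le_div_iff₀ (by positivity) hs1]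
      exact mul_le_mul_of_nonneg_left key_low (by positivity)
    calc D^m / Real.sqrt D / G / (1 + 1/(4*D))^2
        = (D^m / Real.sqrt D / (1 + 1/(4*D))^2) / G := by ring
      _ ≤ (Real.Gamma (D+1/2) * P / Real.Gamma (D+1)) / G :=
          div_le_div_of_nonneg_right (L1.trans L2) hGn.le  -- maybe wrong name
      _ = Real.Gamma (D+1/2) * P / (Real.Gamma (D+1) * G) := by rw [div_div]
  · -- upper bound
    rw [hApow, hGam]
    have U1 : Real.Gamma (D+1/2) * P / Real.Gamma (D+1) ≤ (D + (m:ℝ)/2)^m / Real.sqrt D := by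
      rw [div_le_div_iff₀ hΓ1 hs0]
      calc Real.Gamma (D+1/2) * P * Real.sqrt D = P * (Real.Gamma (D+1/2) * Real.sqrt D) := by ring
        _ ≤ (D + (m:ℝ)/2)^m * Real.Gamma (D+1) := by
            apply mul_le_mul hPup g_up (by positivity) (by positivity)
    have U2 : (D + (m:ℝ)/2)^m / Real.sqrt D ≤ D^m / Real.sqrt D / (1-a)^2 := by
      rw [div_div, div_le_div_iff₀ hs0 (mul_pos hs0 (pow_pos (by linarith : (0:ℝ) < 1 - a) 2))]
      calc (D + (m:ℝ)/2)^m * (Real.sqrt D * (1-a)^2)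
          = ((D + (m:ℝ)/2)^m * (1-a)^2) * Real.sqrt D := by ring
        _ ≤ D^m * Real.sqrt D := mul_le_mul_of_nonneg_right core hs0.le
    calc Real.Gamma (D+1/2) * P / (Real.Gamma (D+1) * G)
        = (Real.Gamma (D+1/2) * P / Real.Gamma (D+1)) / G := by rw [div_div]
      _ ≤ (D^m / Real.sqrt D / (1-a)^2) / G :=
          div_le_div_of_nonneg_right (U1.trans U2) hGn.le
      _ = D^m / Real.sqrt D / G / (1-a)^2 := by ring
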